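/- Let b ∈ EuclideanSpace ℝ (Fin p) satisfy ⟪b, q_{i_l} − q_m⟫ ≥ 0 for every l ∈ {1,…,k} and every index m with i_{l−1} ≤ m ≤ i_l − 1, where by convention i_0 = 1. Then ⟪b, q_i − q_j⟫ ≥ 0 for every ordered pair of indices (i,j) with Δ_i = 1 and j < i; that is, the listed i_k − 1 adjacent constraints imply all constraints b^⊤(q_i − q_j) ≥ 0 of the full feasibility system. -/

import Mathlib

open Finset

/-- Suppose the observations are sorted so that the event times `y` are strictly
decreasing (no ties), and let `idx : Fin k → Fin n` be the strictly increasing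
enumeration of the uncensored indices `{i : Δ i = 1}` (nonempty, so `1 ≤ k`).
If `b` satisfies the adjacent constraints `⟪b, q (idx l) - q m⟫ ≥ 0` for every `l` and
every `m` with `i_{l-1} ≤ m ≤ idx l - 1` (with the convention `i_0 = ` first index,
encoded by requiring `idx l' ≤ m` for all `l' < l`), then `⟪b, q i - q j⟫ ≥ 0` for
every pair with `Δ i = 1` and `j < i`, i.e., the full feasibility system holds. -/
theorem adjacent_constraints_imply_all (n p k : ℕ) (hn : 1 ≤ n) (hp : 1 ≤ p)
    (hk : 1 ≤ k)
    (q : Fin n → EuclideanSpace ℝ (Fin p))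
    (y : Fin n → ℝ) (hy : StrictAnti y)
    (Δ : Fin n → Bool)
    (idx : Fin k → Fin n) (hmono : StrictMono idx)
    (hrange : ∀ i : Fin n, Δ i = true ↔ ∃ l : Fin k, idx l = i)
    (b : EuclideanSpace ℝ (Fin p))
    (hadj : ∀ (l : Fin k) (m : Fin n), m < idx l →
      (∀ l' : Fin k, l' < l → idx l' ≤ m) →
      0 ≤ (inner ℝ b (q (idx l) - q m) : ℝ)) :
    ∀ i j : Fin n, Δ i = true → j < i → 0 ≤ (inner ℝ b (q i - q j) : ℝ) := by
  -- chain lemma between uncensored indices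
  have key : ∀ N : ℕ, ∀ s t : Fin k, s.val = N → t ≤ s →
      0 ≤ (inner ℝ b (q (idx s) - q (idx t)) : ℝ) := by
    intro N
    induction N with
    | zero =>
      intro s t hs hts
      have : t = s := le_antisymm hts (Fin.le_def.mpr (by omega))
      subst this
      simp
    | succ N ih =>
      intro s t hs hts
      rcases eq_or_lt_of_le hts with h | h
      · subst h; simp
      · have hN : N < k := by omega
        set s' : Fin k := ⟨N, hN⟩ with hs'
        have hs's : s' < s := by simp [Fin.lt_def, hs']; omega
        have hts' : t ≤ s' := by
          have := Fin.lt_def.mp h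
          refine Fin.le_def.mpr ?_
          show t.val ≤ N
          omega
        have step : 0 ≤ (inner ℝ b (q (idx s) - q (idx s')) : ℝ) := by
          apply hadj s (idx s') (hmono hs's)
          intro l' hl'
          refine (hmono.le_iff_le).mpr ?_
          have := Fin.lt_def.mp hl'
          refine Fin.le_def.mpr ?_
          show l'.val ≤ N
          omega
        have rest := ih s' t rfl hts'
        have hsum : (inner ℝ b (q (idx s) - q (idx t)) : ℝ)
            = inner ℝ b (q (idx s) - q (idx s')) + inner ℝ b (q (idx s') - q (idx t)) := by
          rw [← inner_add_right]
          congr 1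
          abel
        linarith [hsum ▸ add_nonneg step rest]
  intro i j hΔ hji
  obtain ⟨l, rfl⟩ := (hrange i).mp hΔ
  -- least l' with j < idx l'
  classical
  set S : Finset (Fin k) := Finset.univ.filter (fun l' => j < idx l') with hS
  have hlS : l ∈ S := by simp [hS, hji]
  have hSne : S.Nonempty := ⟨l, hlS⟩
  set l₀ := S.min' hSne with hl₀
  have hl₀S : l₀ ∈ S := S.min'_mem hSne
  have hjl₀ : j < idx l₀ := by simpa [hS] using hl₀S
  have hl₀l : l₀ ≤ l := S.min'_le l hlS
  have step : 0 ≤ (inner ℝ b (q (idx l₀) - q j) : ℝ) := by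
    apply hadj l₀ j hjl₀
    intro l' hl'
    by_contra hle
    push_neg at hle
    have : l' ∈ S := by simp [hS, hle]
    exact absurd (S.min'_le l' this) (not_le.mpr hl')
  have rest := key l.val l l₀ rfl hl₀l
  have hsum : (inner ℝ b (q (idx l) - q j) : ℝ)
      = inner ℝ b (q (idx l) - q (idx l₀)) + inner ℝ b (q (idx l₀) - q j) := by
    rw [← inner_add_right]
    congr 1
    abel
  linarith [hsum ▸ add_nonneg rest step]
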